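/- Let q be a real number with q > 0 and q ≠ 1, let k ≥ 1 and x ≥ 1 be natural numbers, and let r_1, …, r_k ≥ 1 be natural numbers. Then the q-multinomial coefficient satisfies the recurrence C_q(x; r_1,…,r_k) = q^{m_1} · C_q(x−1; r_1,…,r_k) + Σ_{j=1}^{k} q^{m_{j+1}} · C_q(x−1; r_1,…,r_{j−1}, r_j−1, r_{j+1},…,r_k), where m_j = r_j + ⋯ + r_k and m_{k+1} = 0. -/

import Mathlib

noncomputable def qNum (q : ℝ) (m : ℤ) : ℝ := (1 - q ^ m) / (1 - q)

noncomputable def qFactorial (q : ℝ) (n : ℕ) : ℝ :=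
  ∏ i ∈ Finset.range n, qNum q ((i : ℤ) + 1)

noncomputable def qFacOrd (q : ℝ) (x : ℤ) (r : ℕ) : ℝ :=
  ∏ i ∈ Finset.range r, qNum q (x - (i : ℤ))

noncomputable def qMultinomial (q : ℝ) (x : ℤ) {k : ℕ} (r : Fin k → ℕ) : ℝ :=
  qFacOrd q x (∑ j, r j) / ∏ j, qFactorial q (r j)

lemma qNum_nat (q : ℝ) (n : ℕ) : qNum q (n : ℤ) = (1 - q ^ n) / (1 - q) := by
  simp [qNum, zpow_natCast]

lemma qNum_ne_zero {q : ℝ} (hq : 0 < q) (hq1 : q ≠ 1) {n : ℕ} (hn : n ≠ 0) :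
    qNum q (n : ℤ) ≠ 0 := by
  rw [qNum_nat]
  have h1 : q ^ n ≠ 1 := by
    rcases lt_or_gt_of_ne hq1 with h | h
    · exact ne_of_lt (pow_lt_one₀ hq.le h hn)
    · exact ne_of_gt (one_lt_pow₀ h hn)
  exact div_ne_zero (sub_ne_zero.mpr (Ne.symm h1)) (sub_ne_zero.mpr (Ne.symm hq1))

lemma qFactorial_succ (q : ℝ) (n : ℕ) :
    qFactorial q (n + 1) = qFactorial q n * qNum q ((n + 1 : ℕ) : ℤ) := by
  rw [qFactorial, Finset.prod_range_succ]
  push_cast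
  rfl

lemma qFactorial_ne_zero {q : ℝ} (hq : 0 < q) (hq1 : q ≠ 1) (n : ℕ) :
    qFactorial q n ≠ 0 := by
  rw [qFactorial]
  refine Finset.prod_ne_zero_iff.mpr fun i _ => ?_
  have : ((i : ℤ) + 1) = ((i + 1 : ℕ) : ℤ) := by push_cast; ring
  rw [this]
  exact qNum_ne_zero hq hq1 (Nat.succ_ne_zero i)

lemma tele (q : ℝ) {k : ℕ} (r : Fin k → ℕ) :
    ∑ j : Fin k, q ^ (∑ i ∈ Finset.univ.filter (fun i => j < i), r i) * (1 - q ^ (r j))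
      = 1 - q ^ (∑ i, r i) := by
  set S : ℕ → ℕ := fun t => ∑ i ∈ Finset.univ.filter (fun i : Fin k => t ≤ i.val), r i with hS
  have hSk : S k = 0 := by
    have : Finset.univ.filter (fun i : Fin k => k ≤ i.val) = ∅ := by
      ext i
      simp only [Finset.mem_filter, Finset.mem_univ, true_and, Finset.notMem_empty,
        iff_false, not_le]
      exact i.isLt
    simp [hS, this]
  have hS0 : S 0 = ∑ i, r i := by simp [hS]
  have key : ∀ j : Fin k, S j.val = r j + S (j.val + 1) := by
    intro j
    have hset : Finset.univ.filter (fun i : Fin k => j.val ≤ i.val)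
        = insert j (Finset.univ.filter (fun i : Fin k => j.val + 1 ≤ i.val)) := by
      ext i
      simp only [Finset.mem_filter, Finset.mem_univ, true_and, Finset.mem_insert,
        Fin.ext_iff]
      omega
    show (∑ i ∈ Finset.univ.filter (fun i : Fin k => j.val ≤ i.val), r i)
        = r j + ∑ i ∈ Finset.univ.filter (fun i : Fin k => j.val + 1 ≤ i.val), r i
    rw [hset, Finset.sum_insert (by simp)]
  have step : ∀ j : Fin k,
      q ^ (∑ i ∈ Finset.univ.filter (fun i => j < i), r i) * (1 - q ^ (r j))
        = q ^ (S (j.val + 1)) - q ^ (S j.val) := by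
    intro j
    have hf : Finset.univ.filter (fun i : Fin k => j < i)
        = Finset.univ.filter (fun i : Fin k => j.val + 1 ≤ i.val) := by
      ext i
      simp only [Finset.mem_filter, Finset.mem_univ, true_and, Fin.lt_def]
      omega
    rw [hf, key j, pow_add]
    have : (∑ i ∈ Finset.univ.filter (fun i : Fin k => j.val + 1 ≤ i.val), r i)
        = S (j.val + 1) := rfl
    rw [this]
    ring
  calc ∑ j : Fin k, q ^ (∑ i ∈ Finset.univ.filter (fun i => j < i), r i) * (1 - q ^ (r j))
      = ∑ j : Fin k, (q ^ (S (j.val + 1)) - q ^ (S j.val)) :=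
        Finset.sum_congr rfl fun j _ => step j
    _ = ∑ j ∈ Finset.range k, (q ^ (S (j + 1)) - q ^ (S j)) :=
        Fin.sum_univ_eq_sum_range (fun t => q ^ (S (t + 1)) - q ^ (S t)) k
    _ = q ^ (S k) - q ^ (S 0) := Finset.sum_range_sub (fun t => q ^ (S t)) k
    _ = 1 - q ^ (∑ i, r i) := by rw [hSk, hS0, pow_zero]

lemma qNum_split {q : ℝ} (hq : 0 < q) {k : ℕ} (r : Fin k → ℕ) (x : ℤ) :
    qNum q x = q ^ (∑ i, r i) * qNum q (x - (∑ i, r i : ℕ)) +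
      ∑ j : Fin k, q ^ (∑ i ∈ Finset.univ.filter (fun i => j < i), r i) *
        qNum q ((r j : ℕ) : ℤ) := by
  have hq0 : q ≠ 0 := ne_of_gt hq
  simp only [qNum, qNum_nat, zpow_natCast, ← mul_div_assoc, ← Finset.sum_div,
    ← add_div]
  congr 1
  rw [tele q r]
  have hpow : q ^ (∑ i, r i) * q ^ (x - ((∑ i, r i : ℕ) : ℤ)) = q ^ x := by
    rw [← zpow_natCast q (∑ i, r i), ← zpow_add₀ hq0]
    congr 1
    ring
  rw [mul_sub, mul_one, hpow]
  ring

/-- Inverted-parameter q-multinomial recurrence: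
    C_q(x; r) = q^(m_1) C_q(x−1; r) + Σ_j q^(m_{j+1}) C_q(x−1; r with r_j−1),
    m_j = r_j + ⋯ + r_k, m_{k+1} = 0. -/
theorem qMultinomial_recurrence_inv (q : ℝ) (hq : 0 < q) (hq1 : q ≠ 1)
    (k x : ℕ) (hk : 1 ≤ k) (hx : 1 ≤ x) (r : Fin k → ℕ) (hr : ∀ j, 1 ≤ r j) :
    qMultinomial q (x : ℤ) r =
      q ^ (∑ i, r i) * qMultinomial q ((x : ℤ) - 1) r +
      ∑ j : Fin k,
        q ^ (∑ i ∈ Finset.univ.filter (fun i => j < i), r i) *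
          qMultinomial q ((x : ℤ) - 1) (Function.update r j (r j - 1)) := by
  have hq0 : q ≠ 0 := ne_of_gt hq
  set s : ℕ := ∑ i, r i with hs_def
  have hs1 : 1 ≤ s := by
    calc 1 ≤ r ⟨0, hk⟩ := hr _
    _ ≤ s := Finset.single_le_sum (fun i _ => Nat.zero_le _) (Finset.mem_univ _)
  obtain ⟨n, hn⟩ : ∃ n, s = n + 1 := ⟨s - 1, by omega⟩
  set D : ℝ := ∏ j, qFactorial q (r j) with hD_def
  have hD : D ≠ 0 := Finset.prod_ne_zero_iff.mpr fun j _ => qFactorial_ne_zero hq hq1 _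
  set F : ℝ := qFacOrd q ((x : ℤ) - 1) n with hF_def
  -- LHS numerator
  have hLHS : qMultinomial q (x : ℤ) r = qNum q (x : ℤ) * F / D := by
    rw [qMultinomial, ← hs_def, ← hD_def, hn, qFacOrd, Finset.prod_range_succ']
    congr 1
    rw [hF_def, qFacOrd]
    simp only [Nat.cast_zero, sub_zero]
    rw [mul_comm]
    congr 1
    refine Finset.prod_congr rfl fun i _ => ?_
    congr 1
    push_cast
    ring
  -- first RHS term
  have hT1 : qMultinomial q ((x : ℤ) - 1) r = F * qNum q ((x : ℤ) - (s : ℤ)) / D := by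
    rw [qMultinomial, ← hs_def, ← hD_def, hn, qFacOrd, Finset.prod_range_succ]
    congr 2
    · congr 1
      push_cast [hn]
      ring
  -- the update terms
  have hTj : ∀ j : Fin k, qMultinomial q ((x : ℤ) - 1) (Function.update r j (r j - 1))
      = qNum q ((r j : ℕ) : ℤ) * F / D := by
    intro j
    obtain ⟨m, hm⟩ : ∃ m, r j = m + 1 := ⟨r j - 1, by have := hr j; omega⟩
    have hsum : ∑ i, Function.update r j (r j - 1) i = n := by
      rw [Finset.sum_update_of_mem (Finset.mem_univ j)]
      have hs' : s = r j + ∑ i ∈ Finset.univ \ {j}, r i := by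
        rw [hs_def, ← Finset.sum_update_of_mem (Finset.mem_univ j)]
        simp [Function.update_eq_self]
      omega
    have hprod : D = qNum q ((r j : ℕ) : ℤ) *
        ∏ i, qFactorial q (Function.update r j (r j - 1) i) := by
      rw [Finset.prod_eq_mul_prod_sdiff_singleton_of_mem (Finset.mem_univ j)
          (fun i => qFactorial q (Function.update r j (r j - 1) i)),
        hD_def,
        Finset.prod_eq_mul_prod_sdiff_singleton_of_mem (Finset.mem_univ j)
          (fun i => qFactorial q (r i))]
      have h1 : ∏ i ∈ Finset.univ \ {j}, qFactorial q (Function.update r j (r j - 1) i)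
          = ∏ i ∈ Finset.univ \ {j}, qFactorial q (r i) := by
        refine Finset.prod_congr rfl fun i hi => ?_
        have : i ≠ j := by simpa using (Finset.mem_sdiff.mp hi).2
        rw [Function.update_of_ne this]
      rw [h1, Function.update_self]
      have : r j - 1 = m := by omega
      rw [this, hm, qFactorial_succ]
      ring
    have hne : qNum q ((r j : ℕ) : ℤ) ≠ 0 := qNum_ne_zero hq hq1 (by omega)
    rw [qMultinomial, hsum, ← hF_def, hprod, mul_div_mul_left F _ hne]
  rw [hLHS, hT1, Finset.sum_congr rfl (fun j _ => by rw [hTj j])]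
  simp only [← mul_div_assoc, ← Finset.sum_div, ← add_div]
  congr 1
  rw [qNum_split hq r (x : ℤ), ← hs_def, add_mul, Finset.sum_mul]
  congr 1
  · ring
  · exact Finset.sum_congr rfl fun j _ => by ring
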